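/- Let F₁, F₂ be distribution functions on ℝ such that 1 − F_i(x) ~ a_i x^{−ν_i} as x → ∞, with a_i > 0 and ν_i > 0. Then the convolution G = F₁ * F₂ satisfies 1 − G(x) ~ α x^{−min(ν₁, ν₂)} as x → ∞, where α = a₁ if ν₁ < ν₂, α = a₂ if ν₂ < ν₁, and α = a₁ + a₂ if ν₁ = ν₂. Equivalently, 1 − G(x) ~ (1 − F₁(x)) + (1 − F₂(x)). -/

import Mathlib

open MeasureTheory Filter Topology

private lemma aux_chain {f g h : ℝ → ℝ} {l₁ l₂ : ℝ}
    (hg : ∀ᶠ x in atTop, g x ≠ 0)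
    (h1 : Tendsto (fun x => f x / g x) atTop (𝓝 l₁))
    (h2 : Tendsto (fun x => g x / h x) atTop (𝓝 l₂)) :
    Tendsto (fun x => f x / h x) atTop (𝓝 (l₁ * l₂)) := by
  refine Tendsto.congr' ?_ (h1.mul h2)
  filter_upwards [hg] with x hgx
  rw [div_mul_div_comm, mul_comm (f x) (g x), mul_div_mul_left _ _ hgx]

private lemma aux_ratio (a b ρ σ : ℝ) (hb : b ≠ 0) (h : σ ≤ ρ) :
    Tendsto (fun x : ℝ => (a * x ^ (-ρ)) / (b * x ^ (-σ))) atTop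
      (𝓝 (if ρ = σ then a / b else 0)) := by
  rcases eq_or_lt_of_le h with heq | hlt
  · subst heq
    rw [if_pos rfl]
    refine Tendsto.congr' ?_ tendsto_const_nhds
    filter_upwards [eventually_gt_atTop (0:ℝ)] with x hx
    have hne : x ^ (-σ) ≠ 0 := (Real.rpow_pos_of_pos hx _).ne'
    field_simp
  · rw [if_neg (ne_of_gt hlt)]
    have h0 : Tendsto (fun x : ℝ => (a / b) * x ^ (σ - ρ)) atTop (𝓝 0) := by
      have h1 := (tendsto_rpow_neg_atTop (show (0:ℝ) < ρ - σ by linarith)).const_mul (a / b)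
      rw [mul_zero] at h1
      simpa [neg_sub] using h1
    refine Tendsto.congr' ?_ h0
    filter_upwards [eventually_gt_atTop (0:ℝ)] with x hx
    have hρ : x ^ (-ρ) = x ^ (-σ) * x ^ (σ - ρ) := by
      rw [← Real.rpow_add hx]; ring_nf
    have hne : x ^ (-σ) ≠ 0 := (Real.rpow_pos_of_pos hx _).ne'
    rw [hρ]
    field_simp

private lemma aux_scale {t : ℝ → ℝ} {a ν : ℝ} (ha : a ≠ 0)
    (h : Tendsto (fun x => t x / (a * x ^ (-ν))) atTop (𝓝 1)) {c : ℝ} (hc : 0 < c) :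
    Tendsto (fun x => t (c * x) / (a * x ^ (-ν))) atTop (𝓝 (c ^ (-ν))) := by
  have hcomp : Tendsto (fun x : ℝ => c * x) atTop atTop :=
    Tendsto.const_mul_atTop hc tendsto_id
  have h1 := (h.comp hcomp).mul_const (c ^ (-ν))
  rw [one_mul] at h1
  refine Tendsto.congr' ?_ h1
  filter_upwards [eventually_gt_atTop (0:ℝ)] with x hx
  have hcx : (c * x) ^ (-ν) = c ^ (-ν) * x ^ (-ν) := Real.mul_rpow hc.le hx.le
  have hc' : c ^ (-ν) ≠ 0 := (Real.rpow_pos_of_pos hc _).ne'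
  have hx' : x ^ (-ν) ≠ 0 := (Real.rpow_pos_of_pos hx _).ne'
  simp only [Function.comp]
  rw [hcx]
  field_simp

private lemma aux_shift {t : ℝ → ℝ} {a ν : ℝ}
    (h : Tendsto (fun x => t x / (a * x ^ (-ν))) atTop (𝓝 1)) (M : ℝ) :
    Tendsto (fun x => t (x + M) / (a * x ^ (-ν))) atTop (𝓝 1) := by
  have hcomp : Tendsto (fun x : ℝ => x + M) atTop atTop :=
    tendsto_atTop_add_const_right _ M tendsto_id
  have h1 : Tendsto (fun x => t (x + M) / (a * (x + M) ^ (-ν))) atTop (𝓝 1) := h.comp hcomp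
  have hx1 : Tendsto (fun x : ℝ => (x + M) / x) atTop (𝓝 1) := by
    have h2 : Tendsto (fun x : ℝ => 1 + M / x) atTop (𝓝 (1 + 0)) :=
      tendsto_const_nhds.add (tendsto_const_nhds.div_atTop tendsto_id)
    rw [add_zero] at h2
    refine Tendsto.congr' ?_ h2
    filter_upwards [eventually_gt_atTop (0:ℝ)] with x hx
    field_simp
  have h2 : Tendsto (fun x : ℝ => ((x + M) / x) ^ (-ν)) atTop (𝓝 1) := by
    have hcont := (Real.continuousAt_rpow_const 1 (-ν) (Or.inl one_ne_zero)).tendsto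
    have := hcont.comp hx1
    simpa [Real.one_rpow, Function.comp_def] using this
  have h3 := h1.mul h2
  rw [mul_one] at h3
  refine Tendsto.congr' ?_ h3
  filter_upwards [eventually_gt_atTop (0:ℝ), eventually_gt_atTop (-M)] with x hx hxM
  have hxM' : 0 < x + M := by linarith
  rw [Real.div_rpow hxM'.le hx.le]
  have h4 : (x + M) ^ (-ν) ≠ 0 := (Real.rpow_pos_of_pos hxM' _).ne'
  have h5 : x ^ (-ν) ≠ 0 := (Real.rpow_pos_of_pos hx _).ne'
  field_simp

private lemma aux_to_zero {t : ℝ → ℝ} {a ν : ℝ} (ha : a ≠ 0) (hν : 0 < ν)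
    (h : Tendsto (fun x => t x / (a * x ^ (-ν))) atTop (𝓝 1)) :
    Tendsto t atTop (𝓝 0) := by
  have h0 : Tendsto (fun x : ℝ => a * x ^ (-ν)) atTop (𝓝 0) := by
    have := (tendsto_rpow_neg_atTop hν).const_mul a
    simpa using this
  have h1 := h.mul h0
  rw [one_mul] at h1
  refine Tendsto.congr' ?_ h1
  filter_upwards [eventually_gt_atTop (0:ℝ)] with x hx
  have : a * x ^ (-ν) ≠ 0 := mul_ne_zero ha (Real.rpow_pos_of_pos hx _).ne'
  field_simp

/-- Feller's convolution result for power-law tails: if `1 - Fᵢ(x) ~ aᵢ x^{-νᵢ}`,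
then the distribution `G` of the sum of independent random variables with laws
`μ₁, μ₂` satisfies `1 - G(x) ~ α x^{-min(ν₁,ν₂)}`, where `α = a₁`, `a₂` or
`a₁ + a₂` according to which exponent is smaller; equivalently
`1 - G(x) ~ (1 - F₁(x)) + (1 - F₂(x))`. -/
theorem feller_convolution_power_tails
    (μ₁ μ₂ : Measure ℝ) [IsProbabilityMeasure μ₁] [IsProbabilityMeasure μ₂]
    (a₁ a₂ ν₁ ν₂ : ℝ) (ha₁ : 0 < a₁) (ha₂ : 0 < a₂) (hν₁ : 0 < ν₁) (hν₂ : 0 < ν₂)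
    (F₁ F₂ G : ℝ → ℝ)
    (hF₁ : ∀ x, F₁ x = (μ₁ (Set.Iic x)).toReal)
    (hF₂ : ∀ x, F₂ x = (μ₂ (Set.Iic x)).toReal)
    (hG : ∀ x, G x = ((μ₁.prod μ₂) {q : ℝ × ℝ | q.1 + q.2 ≤ x}).toReal)
    (htail₁ : Tendsto (fun x : ℝ => (1 - F₁ x) / (a₁ * x ^ (-ν₁))) atTop (𝓝 1))
    (htail₂ : Tendsto (fun x : ℝ => (1 - F₂ x) / (a₂ * x ^ (-ν₂))) atTop (𝓝 1))
    (α : ℝ) (hα : α = if ν₁ < ν₂ then a₁ else if ν₂ < ν₁ then a₂ else a₁ + a₂) :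
    Tendsto (fun x : ℝ => (1 - G x) / (α * x ^ (-(min ν₁ ν₂)))) atTop (𝓝 1) ∧
      Tendsto (fun x : ℝ => (1 - G x) / ((1 - F₁ x) + (1 - F₂ x))) atTop (𝓝 1) := by
  set ν : ℝ := min ν₁ ν₂ with hνdef
  have hνpos : 0 < ν := lt_min hν₁ hν₂
  have hαpos : 0 < α := by rw [hα]; split_ifs <;> linarith
  -- tail representations
  have hT₁ : ∀ x : ℝ, 1 - F₁ x = (μ₁ (Set.Ioi x)).toReal := by
    intro x
    rw [hF₁, ← Set.compl_Iic, prob_compl_eq_one_sub measurableSet_Iic,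
      ENNReal.toReal_sub_of_le prob_le_one ENNReal.one_ne_top, ENNReal.toReal_one]
  have hT₂ : ∀ x : ℝ, 1 - F₂ x = (μ₂ (Set.Ioi x)).toReal := by
    intro x
    rw [hF₂, ← Set.compl_Iic, prob_compl_eq_one_sub measurableSet_Iic,
      ENNReal.toReal_sub_of_le prob_le_one ENNReal.one_ne_top, ENNReal.toReal_one]
  have hmeas : ∀ x : ℝ, MeasurableSet {q : ℝ × ℝ | q.1 + q.2 ≤ x} := fun x =>
    measurableSet_le (measurable_fst.add measurable_snd) measurable_const
  have hTG : ∀ x : ℝ, 1 - G x = ((μ₁.prod μ₂) {q : ℝ × ℝ | x < q.1 + q.2}).toReal := by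
    intro x
    have hc : {q : ℝ × ℝ | x < q.1 + q.2} = {q : ℝ × ℝ | q.1 + q.2 ≤ x}ᶜ := by
      ext q; simp [not_le]
    rw [hG, hc, prob_compl_eq_one_sub (hmeas x),
      ENNReal.toReal_sub_of_le prob_le_one ENNReal.one_ne_top, ENNReal.toReal_one]
  -- measure inequality: upper bound
  have hU : ∀ c x : ℝ, 1 - G x ≤
      ((1 - F₁ (c * x)) + (1 - F₂ (c * x))) +
        (1 - F₁ ((1 - c) * x)) * (1 - F₂ ((1 - c) * x)) := by
    intro c x
    have hsub : {q : ℝ × ℝ | x < q.1 + q.2} ⊆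
        (Set.Ioi (c * x) ×ˢ Set.univ ∪ Set.univ ×ˢ Set.Ioi (c * x)) ∪
          Set.Ioi ((1 - c) * x) ×ˢ Set.Ioi ((1 - c) * x) := by
      rintro ⟨p, q⟩ hpq
      simp only [Set.mem_setOf_eq] at hpq
      simp only [Set.mem_union, Set.mem_prod, Set.mem_Ioi, Set.mem_univ, and_true, true_and]
      by_cases h1 : c * x < p
      · exact Or.inl (Or.inl h1)
      by_cases h2 : c * x < q
      · exact Or.inl (Or.inr h2)
      push_neg at h1 h2
      exact Or.inr ⟨by nlinarith, by nlinarith⟩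
    have hEN : (μ₁.prod μ₂) {q : ℝ × ℝ | x < q.1 + q.2} ≤
        μ₁ (Set.Ioi (c * x)) + μ₂ (Set.Ioi (c * x)) +
          μ₁ (Set.Ioi ((1 - c) * x)) * μ₂ (Set.Ioi ((1 - c) * x)) := by
      calc (μ₁.prod μ₂) {q : ℝ × ℝ | x < q.1 + q.2}
          ≤ (μ₁.prod μ₂) ((Set.Ioi (c * x) ×ˢ Set.univ ∪ Set.univ ×ˢ Set.Ioi (c * x)) ∪
              Set.Ioi ((1 - c) * x) ×ˢ Set.Ioi ((1 - c) * x)) := measure_mono hsub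
        _ ≤ (μ₁.prod μ₂) (Set.Ioi (c * x) ×ˢ Set.univ ∪ Set.univ ×ˢ Set.Ioi (c * x)) +
              (μ₁.prod μ₂) (Set.Ioi ((1 - c) * x) ×ˢ Set.Ioi ((1 - c) * x)) :=
            measure_union_le _ _
        _ ≤ ((μ₁.prod μ₂) (Set.Ioi (c * x) ×ˢ Set.univ) +
              (μ₁.prod μ₂) (Set.univ ×ˢ Set.Ioi (c * x))) +
              (μ₁.prod μ₂) (Set.Ioi ((1 - c) * x) ×ˢ Set.Ioi ((1 - c) * x)) :=
            add_le_add (measure_union_le _ _) le_rfl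
        _ = _ := by
            rw [Measure.prod_prod, Measure.prod_prod, Measure.prod_prod, measure_univ,
              measure_univ, one_mul, mul_one]
    have hfin : μ₁ (Set.Ioi (c * x)) + μ₂ (Set.Ioi (c * x)) +
        μ₁ (Set.Ioi ((1 - c) * x)) * μ₂ (Set.Ioi ((1 - c) * x)) ≠ ⊤ :=
      ENNReal.add_ne_top.2 ⟨ENNReal.add_ne_top.2 ⟨measure_ne_top _ _, measure_ne_top _ _⟩,
        ENNReal.mul_ne_top (measure_ne_top _ _) (measure_ne_top _ _)⟩
    have hmono := ENNReal.toReal_mono hfin hEN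
    rw [ENNReal.toReal_add (ENNReal.add_ne_top.2 ⟨measure_ne_top _ _, measure_ne_top _ _⟩)
        (ENNReal.mul_ne_top (measure_ne_top _ _) (measure_ne_top _ _)),
      ENNReal.toReal_add (measure_ne_top _ _) (measure_ne_top _ _),
      ENNReal.toReal_mul] at hmono
    rw [hTG, hT₁, hT₂, hT₁, hT₂]
    exact hmono
  -- measure inequality: lower bound
  have hL : ∀ m x : ℝ,
      (1 - F₁ (x + -m)) * (μ₂ (Set.Ici m)).toReal +
          (μ₁ (Set.Ici m)).toReal * (1 - F₂ (x + -m)) -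
          (1 - F₁ (x + -m)) * (1 - F₂ (x + -m)) ≤ 1 - G x := by
    intro m x
    set A := Set.Ioi (x + -m) ×ˢ Set.Ici m with hA
    set B := Set.Ici m ×ˢ Set.Ioi (x + -m) with hB
    have hBmeas : MeasurableSet B := measurableSet_Ici.prod measurableSet_Ioi
    have hsub : A ∪ B ⊆ {q : ℝ × ℝ | x < q.1 + q.2} := by
      rintro ⟨p, q⟩ (⟨hp, hq⟩ | ⟨hp, hq⟩) <;>
      · simp only [Set.mem_Ioi, Set.mem_Ici] at hp hq
        simp only [Set.mem_setOf_eq]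
        linarith
    have hint : A ∩ B ⊆ Set.Ioi (x + -m) ×ˢ Set.Ioi (x + -m) := by
      rw [hA, hB, Set.prod_inter_prod]
      exact Set.prod_mono Set.inter_subset_left Set.inter_subset_right
    have hkey := measure_union_add_inter (μ := μ₁.prod μ₂) A hBmeas
    have h1 : ((μ₁.prod μ₂) (A ∪ B)).toReal + ((μ₁.prod μ₂) (A ∩ B)).toReal
        = ((μ₁.prod μ₂) A).toReal + ((μ₁.prod μ₂) B).toReal := by
      rw [← ENNReal.toReal_add (measure_ne_top _ _) (measure_ne_top _ _),
        ← ENNReal.toReal_add (measure_ne_top _ _) (measure_ne_top _ _), hkey]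
    have h2 : ((μ₁.prod μ₂) (A ∪ B)).toReal ≤ 1 - G x := by
      rw [hTG]
      exact ENNReal.toReal_mono (measure_ne_top _ _) (measure_mono hsub)
    have h3 : ((μ₁.prod μ₂) (A ∩ B)).toReal ≤ (1 - F₁ (x + -m)) * (1 - F₂ (x + -m)) := by
      rw [hT₁, hT₂, ← ENNReal.toReal_mul, ← Measure.prod_prod]
      exact ENNReal.toReal_mono (measure_ne_top _ _) (measure_mono hint)
    have h4 : ((μ₁.prod μ₂) A).toReal = (1 - F₁ (x + -m)) * (μ₂ (Set.Ici m)).toReal := by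
      rw [hA, Measure.prod_prod, ENNReal.toReal_mul, hT₁]
    have h5 : ((μ₁.prod μ₂) B).toReal = (μ₁ (Set.Ici m)).toReal * (1 - F₂ (x + -m)) := by
      rw [hB, Measure.prod_prod, ENNReal.toReal_mul, hT₂]
    linarith
  -- analytic ingredients
  have hp₁ne : ∀ᶠ x : ℝ in atTop, a₁ * x ^ (-ν₁) ≠ 0 := by
    filter_upwards [eventually_gt_atTop (0:ℝ)] with x hx
    exact mul_ne_zero ha₁.ne' (Real.rpow_pos_of_pos hx _).ne'
  have hp₂ne : ∀ᶠ x : ℝ in atTop, a₂ * x ^ (-ν₂) ≠ 0 := by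
    filter_upwards [eventually_gt_atTop (0:ℝ)] with x hx
    exact mul_ne_zero ha₂.ne' (Real.rpow_pos_of_pos hx _).ne'
  set l₁ : ℝ := if ν₁ = ν then a₁ / α else 0 with hl₁def
  set l₂ : ℝ := if ν₂ = ν then a₂ / α else 0 with hl₂def
  have hl₁nonneg : 0 ≤ l₁ := by
    rw [hl₁def]; split_ifs
    · positivity
    · exact le_refl 0
  have hl₂nonneg : 0 ≤ l₂ := by
    rw [hl₂def]; split_ifs
    · positivity
    · exact le_refl 0
  have hlsum : l₁ + l₂ = 1 := by
    rw [hl₁def, hl₂def, hνdef]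
    rcases lt_trichotomy ν₁ ν₂ with h | h | h
    · rw [min_eq_left h.le, if_pos rfl, if_neg (by intro he; exact absurd he (ne_of_gt h)), hα,
        if_pos h]
      field_simp
      norm_num
    · rw [h, min_self, if_pos rfl, if_pos rfl, hα, if_neg (by rw [h]; exact lt_irrefl _),
        if_neg (by rw [h]; exact lt_irrefl _)]
      field_simp
    · rw [min_eq_right h.le, if_neg (ne_of_gt h), if_pos rfl, hα,
        if_neg (by exact fun hh => absurd hh (not_lt.2 h.le)), if_pos h]
      field_simp
      norm_num
  have hr₁ : Tendsto (fun x : ℝ => (a₁ * x ^ (-ν₁)) / (α * x ^ (-ν))) atTop (𝓝 l₁) := by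
    rw [hl₁def]
    exact aux_ratio a₁ α ν₁ ν hαpos.ne' (min_le_left _ _)
  have hr₂ : Tendsto (fun x : ℝ => (a₂ * x ^ (-ν₂)) / (α * x ^ (-ν))) atTop (𝓝 l₂) := by
    rw [hl₂def]
    exact aux_ratio a₂ α ν₂ ν hαpos.ne' (min_le_right _ _)
  have hq₁ : Tendsto (fun x : ℝ => (1 - F₁ x) / (α * x ^ (-ν))) atTop (𝓝 l₁) := by
    have := aux_chain hp₁ne htail₁ hr₁
    simpa using this
  have hq₂ : Tendsto (fun x : ℝ => (1 - F₂ x) / (α * x ^ (-ν))) atTop (𝓝 l₂) := by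
    have := aux_chain hp₂ne htail₂ hr₂
    simpa using this
  have hsum : Tendsto (fun x : ℝ => ((1 - F₁ x) + (1 - F₂ x)) / (α * x ^ (-ν))) atTop (𝓝 1) := by
    have h := hq₁.add hq₂
    rw [hlsum] at h
    exact h.congr fun x => (add_div _ _ _).symm
  have hSpos : ∀ x : ℝ, 0 < x → 0 < α * x ^ (-ν) := fun x hx =>
    mul_pos hαpos (Real.rpow_pos_of_pos hx _)
  -- upper eventual bound
  have hupper : ∀ ε : ℝ, 0 < ε → ∀ᶠ x in atTop, (1 - G x) / (α * x ^ (-ν)) < 1 + ε := by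
    intro ε hε
    have hcont : Tendsto (fun y : ℝ => y ^ (-ν)) (𝓝[<] (1:ℝ)) (𝓝 1) := by
      have h := (Real.continuousAt_rpow_const 1 (-ν) (Or.inl one_ne_zero)).tendsto
      rw [Real.one_rpow] at h
      exact h.mono_left nhdsWithin_le_nhds
    have h1 : ∀ᶠ y in 𝓝[<] (1:ℝ), y ^ (-ν) < 1 + ε / 2 :=
      hcont.eventually_lt_const (by linarith)
    have h2 : ∀ᶠ y in 𝓝[<] (1:ℝ), (0:ℝ) < y :=
      eventually_nhdsWithin_of_eventually_nhds (eventually_gt_nhds one_pos)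
    have h3 : ∀ᶠ y in 𝓝[<] (1:ℝ), y < 1 := eventually_mem_nhdsWithin
    obtain ⟨c, hcp, hc0, hc1⟩ := (h1.and (h2.and h3)).exists
    have hδ : (0:ℝ) < 1 - c := by linarith
    have hub1 : Tendsto (fun x : ℝ => ((1 - F₁ (c * x)) + (1 - F₂ (c * x))) / (α * x ^ (-ν)))
        atTop (𝓝 (c ^ (-ν))) :=
      aux_scale (t := fun x => (1 - F₁ x) + (1 - F₂ x)) hαpos.ne' hsum hc0
    have hz₁ : Tendsto (fun x : ℝ => 1 - F₁ ((1 - c) * x)) atTop (𝓝 0) :=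
      (aux_to_zero ha₁.ne' hν₁ htail₁).comp (Tendsto.const_mul_atTop hδ tendsto_id)
    have hz₂ : Tendsto (fun x : ℝ => (1 - F₂ ((1 - c) * x)) / (α * x ^ (-ν))) atTop
        (𝓝 ((1 - c) ^ (-ν₂) * l₂)) :=
      aux_chain hp₂ne (aux_scale (t := fun x => 1 - F₂ x) ha₂.ne' htail₂ hδ) hr₂
    have hub2 : Tendsto
        (fun x : ℝ => (1 - F₁ ((1 - c) * x)) * (1 - F₂ ((1 - c) * x)) / (α * x ^ (-ν)))
        atTop (𝓝 0) := by
      have h := hz₁.mul hz₂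
      rw [zero_mul] at h
      exact h.congr fun x => (mul_div_assoc _ _ _).symm
    have hB := hub1.add hub2
    have hBlt := hB.eventually_lt_const (show c ^ (-ν) + 0 < 1 + ε by rw [add_zero]; linarith)
    filter_upwards [hBlt, eventually_gt_atTop (0:ℝ)] with x hBx hx
    have hS := hSpos x hx
    have hux := hU c x
    have hdiv : (1 - G x) / (α * x ^ (-ν)) ≤
        (((1 - F₁ (c * x)) + (1 - F₂ (c * x))) +
          (1 - F₁ ((1 - c) * x)) * (1 - F₂ ((1 - c) * x))) / (α * x ^ (-ν)) := by
      gcongr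
    rw [add_div] at hdiv
    linarith
  -- lower eventual bound
  have hlower : ∀ ε : ℝ, 0 < ε → ∀ᶠ x in atTop, 1 - ε < (1 - G x) / (α * x ^ (-ν)) := by
    intro ε hε
    have hm₁ : Tendsto (fun y : ℝ => (μ₁ (Set.Ici y)).toReal) atBot (𝓝 1) := by
      have h := tendsto_measure_Ici_atBot μ₁
      rw [measure_univ] at h
      have h' := (ENNReal.tendsto_toReal ENNReal.one_ne_top).comp h
      simpa [Function.comp_def] using h'
    have hm₂ : Tendsto (fun y : ℝ => (μ₂ (Set.Ici y)).toReal) atBot (𝓝 1) := by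
      have h := tendsto_measure_Ici_atBot μ₂
      rw [measure_univ] at h
      have h' := (ENNReal.tendsto_toReal ENNReal.one_ne_top).comp h
      simpa [Function.comp_def] using h'
    have hev₁ : ∀ᶠ y in atBot, 1 - ε / 2 < (μ₁ (Set.Ici y)).toReal :=
      hm₁.eventually_const_lt (by linarith)
    have hev₂ : ∀ᶠ y in atBot, 1 - ε / 2 < (μ₂ (Set.Ici y)).toReal :=
      hm₂.eventually_const_lt (by linarith)
    obtain ⟨m, hmu₁, hmu₂⟩ := (hev₁.and hev₂).exists
    have hs₁ : Tendsto (fun x : ℝ => (1 - F₁ (x + -m)) / (α * x ^ (-ν))) atTop (𝓝 l₁) := by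
      have h := aux_chain hp₁ne (aux_shift (t := fun x => 1 - F₁ x) htail₁ (-m)) hr₁
      simpa using h
    have hs₂ : Tendsto (fun x : ℝ => (1 - F₂ (x + -m)) / (α * x ^ (-ν))) atTop (𝓝 l₂) := by
      have h := aux_chain hp₂ne (aux_shift (t := fun x => 1 - F₂ x) htail₂ (-m)) hr₂
      simpa using h
    have hz : Tendsto
        (fun x : ℝ => (1 - F₁ (x + -m)) * (1 - F₂ (x + -m)) / (α * x ^ (-ν))) atTop (𝓝 0) := by
      have h1 : Tendsto (fun x : ℝ => 1 - F₁ (x + -m)) atTop (𝓝 0) :=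
        (aux_to_zero ha₁.ne' hν₁ htail₁).comp (tendsto_atTop_add_const_right _ _ tendsto_id)
      have h := h1.mul hs₂
      rw [zero_mul] at h
      exact h.congr fun x => (mul_div_assoc _ _ _).symm
    have hC : Tendsto (fun x : ℝ =>
        ((1 - F₁ (x + -m)) * (μ₂ (Set.Ici m)).toReal +
          (μ₁ (Set.Ici m)).toReal * (1 - F₂ (x + -m)) -
          (1 - F₁ (x + -m)) * (1 - F₂ (x + -m))) / (α * x ^ (-ν))) atTop
        (𝓝 (l₁ * (μ₂ (Set.Ici m)).toReal + (μ₁ (Set.Ici m)).toReal * l₂ - 0)) := by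
      have h := ((hs₁.mul_const ((μ₂ (Set.Ici m)).toReal)).add
        (hs₂.const_mul ((μ₁ (Set.Ici m)).toReal))).sub hz
      exact h.congr fun x => by ring
    have hgt : 1 - ε < l₁ * (μ₂ (Set.Ici m)).toReal + (μ₁ (Set.Ici m)).toReal * l₂ - 0 := by
      have e₁ : l₁ * (1 - ε / 2) ≤ l₁ * (μ₂ (Set.Ici m)).toReal :=
        mul_le_mul_of_nonneg_left hmu₂.le hl₁nonneg
      have e₂ : (1 - ε / 2) * l₂ ≤ (μ₁ (Set.Ici m)).toReal * l₂ :=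
        mul_le_mul_of_nonneg_right hmu₁.le hl₂nonneg
      have key : l₁ * (1 - ε / 2) + (1 - ε / 2) * l₂ = 1 - ε / 2 := by
        rw [mul_comm l₁ _, ← mul_add, hlsum, mul_one]
      linarith
    have hCev := hC.eventually_const_lt hgt
    filter_upwards [hCev, eventually_gt_atTop (0:ℝ)] with x hCx hx
    have hS := hSpos x hx
    have hineq := hL m x
    have hdiv : ((1 - F₁ (x + -m)) * (μ₂ (Set.Ici m)).toReal +
        (μ₁ (Set.Ici m)).toReal * (1 - F₂ (x + -m)) -
        (1 - F₁ (x + -m)) * (1 - F₂ (x + -m))) / (α * x ^ (-ν)) ≤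
        (1 - G x) / (α * x ^ (-ν)) := by gcongr
    linarith
  -- conclusion
  have hQ : Tendsto (fun x : ℝ => (1 - G x) / (α * x ^ (-ν))) atTop (𝓝 1) := by
    rw [Metric.tendsto_nhds]
    intro ε hε
    filter_upwards [hupper ε hε, hlower ε hε] with x h1 h2
    rw [Real.dist_eq, abs_sub_lt_iff]
    constructor <;> linarith
  refine ⟨hQ, ?_⟩
  have hdivlim := hQ.div hsum one_ne_zero
  norm_num at hdivlim
  refine Tendsto.congr' ?_ hdivlim
  have hTpos : ∀ᶠ x in atTop, 0 < (1 - F₁ x) + (1 - F₂ x) := by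
    have h := hsum.eventually_const_lt (show (1:ℝ)/2 < 1 by norm_num)
    filter_upwards [h, eventually_gt_atTop (0:ℝ)] with x hhx hx
    have hS := hSpos x hx
    by_contra hle
    push_neg at hle
    have : ((1 - F₁ x) + (1 - F₂ x)) / (α * x ^ (-ν)) ≤ 0 :=
      div_nonpos_of_nonpos_of_nonneg hle hS.le
    linarith
  filter_upwards [hTpos, eventually_gt_atTop (0:ℝ)] with x hT hx
  have hS := hSpos x hx
  simp only [Pi.div_apply]
  rw [div_div_div_eq]
  rw [mul_comm (α * x ^ (-ν)) ((1 - F₁ x) + (1 - F₂ x)), mul_div_mul_right _ _ hS.ne']
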